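/- (Wielandt) If H and K are subnormal subgroups of a finite group G, then the join ⟨H, K⟩ is subnormal in G. -/

import Mathlib

/-- `H` is a subnormal subgroup of `G`. -/
def IsSubnormal {G : Type*} [Group G] (H : Subgroup G) : Prop :=
  ∃ (m : ℕ) (c : Fin (m + 1) → Subgroup G), c 0 = ⊤ ∧ c (Fin.last m) = H ∧
    ∀ i : Fin m, c i.succ ≤ c i.castSucc ∧
      ((c i.succ).subgroupOf (c i.castSucc)).Normal

namespace WielandtAux

variable {G : Type*} [Group G]

/-- `Step A B` : `B` is a normal subgroup of `A` (as subgroups of `G`). -/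
def Step (A B : Subgroup G) : Prop :=
  B ≤ A ∧ ∀ a ∈ A, ∀ b ∈ B, a * b * a⁻¹ ∈ B

/-- `Sn H` : there is a subnormal chain from `⊤` down to `H`. -/
def Sn (H : Subgroup G) : Prop := Relation.ReflTransGen Step ⊤ H

lemma rtg_le {A B : Subgroup G} (h : Relation.ReflTransGen Step A B) : B ≤ A := by
  induction h with
  | refl => exact le_rfl
  | tail _ h ih => exact h.1.trans ih

lemma step_of_normal {A B : Subgroup G} (hle : B ≤ A)
    (hn : (B.subgroupOf A).Normal) : Step A B := by
  refine ⟨hle, fun a ha b hb => ?_⟩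
  have := hn.conj_mem ⟨b, hle hb⟩ (Subgroup.mem_subgroupOf.mpr hb) ⟨a, ha⟩
  simpa [Subgroup.mem_subgroupOf] using this

lemma normal_of_step {A B : Subgroup G} (h : Step A B) : (B.subgroupOf A).Normal := by
  constructor
  rintro ⟨n, hnA⟩ hn ⟨g, hgA⟩
  simp only [Subgroup.mem_subgroupOf] at hn ⊢
  exact h.2 g hgA n hn

lemma sn_of_isSubnormal {H : Subgroup G} (h : IsSubnormal H) : Sn H := by
  obtain ⟨m, c, hc0, hclast, hcond⟩ := h
  have key : ∀ (m : ℕ) (c : Fin (m+1) → Subgroup G),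
      (∀ i : Fin m, c i.succ ≤ c i.castSucc ∧ ((c i.succ).subgroupOf (c i.castSucc)).Normal) →
      Relation.ReflTransGen Step (c 0) (c (Fin.last m)) := by
    intro m
    induction m with
    | zero => intro c _; exact Relation.ReflTransGen.refl
    | succ k ih =>
      intro c hcond
      have h1 := ih (fun i => c i.castSucc) (fun i => by
        have := hcond i.castSucc
        simpa only [Fin.succ_castSucc] using this)
      simp only [Fin.castSucc_zero] at h1
      refine h1.tail ?_
      have h2 := hcond (Fin.last k)
      rw [Fin.succ_last] at h2
      exact step_of_normal h2.1 h2.2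
  have := key m c hcond
  rwa [hc0, hclast] at this

lemma isSubnormal_of_sn {H : Subgroup G} (h : Sn H) : IsSubnormal H := by
  induction h with
  | refl => exact ⟨0, fun _ => ⊤, rfl, rfl, fun i => i.elim0⟩
  | @tail B C _ hstep ih =>
    obtain ⟨m, c, hc0, hclast, hcond⟩ := ih
    refine ⟨m + 1, Fin.snoc c C, ?_, ?_, ?_⟩
    · rw [show (0 : Fin (m+2)) = Fin.castSucc 0 from rfl, Fin.snoc_castSucc, hc0]
    · rw [Fin.snoc_last]
    · intro i
      refine Fin.lastCases ?_ ?_ i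
      · simp only [Fin.succ_last, Fin.snoc_last]
        rw [Fin.snoc_castSucc, hclast]
        exact ⟨hstep.1, normal_of_step hstep⟩
      · intro j
        simp only [Fin.succ_castSucc, Fin.snoc_castSucc]
        rw [Fin.snoc_castSucc]
        exact hcond j
/-- Conjugate of a subgroup. -/
def cj (g : G) (H : Subgroup G) : Subgroup G := H.map (MulAut.conj g).toMonoidHom

lemma mem_cj {g x : G} {H : Subgroup G} : x ∈ cj g H ↔ g⁻¹ * x * g ∈ H := by
  constructor
  · rintro ⟨h, hh, rfl⟩
    simpa [MulAut.conj_apply, mul_assoc] using hh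
  · intro h
    exact ⟨g⁻¹ * x * g, h, by simp [MulAut.conj_apply]; group⟩

lemma cj_mono {g : G} {A B : Subgroup G} (h : A ≤ B) : cj g A ≤ cj g B :=
  Subgroup.map_mono h

lemma cj_one (H : Subgroup G) : cj 1 H = H := by
  ext x; simp [mem_cj]

lemma cj_cj (g h : G) (H : Subgroup G) : cj g (cj h H) = cj (g * h) H := by
  ext x; simp [mem_cj, mul_assoc]

lemma cj_top (g : G) : cj g (⊤ : Subgroup G) = ⊤ := by
  ext x; simp [mem_cj]

lemma cj_bot (g : G) : cj g (⊥ : Subgroup G) = ⊥ := by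
  ext x
  rw [mem_cj, Subgroup.mem_bot, Subgroup.mem_bot]
  constructor
  · intro h
    have : x = g * 1 * g⁻¹ := by
      rw [← h]; group
    simpa using this
  · rintro rfl; group

lemma cj_sup (g : G) (A B : Subgroup G) : cj g (A ⊔ B) = cj g A ⊔ cj g B :=
  Subgroup.map_sup _ _ _

lemma cj_of_normal {g : G} {N : Subgroup G} (hN : N.Normal) : cj g N = N := by
  ext x
  rw [mem_cj]
  constructor
  · intro h
    have := hN.conj_mem _ h g
    simpa [mul_assoc] using this
  · intro h
    have := hN.conj_mem _ h g⁻¹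
    simpa [mul_assoc] using this

lemma mem_normalizer_of_cj_eq {g : G} {P : Subgroup G} (h : cj g P = P) :
    g ∈ Subgroup.normalizer (P : Set G) := by
  rw [Subgroup.mem_normalizer_iff]
  intro x
  constructor
  · intro hx
    have : g * x * g⁻¹ ∈ cj g P := mem_cj.mpr (by simpa [mul_assoc] using hx)
    rwa [h] at this
  · intro hx
    rw [← h] at hx
    rw [mem_cj] at hx
    simpa [mul_assoc] using hx

lemma cj_eq_of_mem_normalizer {g : G} {A : Subgroup G} (h : g ∈ Subgroup.normalizer (A : Set G)) :
    cj g A = A := by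
  have hiff := Subgroup.mem_normalizer_iff.mp h
  ext x
  rw [mem_cj]
  have h2 := hiff (g⁻¹ * x * g)
  rw [show g * (g⁻¹ * x * g) * g⁻¹ = x by group] at h2
  exact h2

lemma step_cj {g : G} {A B : Subgroup G} (hs : Step A B) : Step (cj g A) (cj g B) := by
  refine ⟨cj_mono hs.1, ?_⟩
  intro a ha b hb
  rw [mem_cj] at ha hb ⊢
  have h2 := hs.2 _ ha _ hb
  have : g⁻¹ * (a * b * a⁻¹) * g
      = (g⁻¹ * a * g) * (g⁻¹ * b * g) * (g⁻¹ * a * g)⁻¹ := by group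
  rwa [this]

lemma sn_conj {g : G} {H : Subgroup G} (h : Sn H) : Sn (cj g H) := by
  have h2 : Relation.ReflTransGen Step (cj g ⊤) (cj g H) := Relation.ReflTransGen.lift (cj g)
    (fun A B hs => step_cj (g := g) hs) _ _ h
  rwa [cj_top] at h2
open scoped Pointwise

lemma sn_top : Sn (⊤ : Subgroup G) := Relation.ReflTransGen.refl

lemma sn_of_normal {N : Subgroup G} (hN : N.Normal) : Sn N :=
  Relation.ReflTransGen.single ⟨le_top, fun a _ b hb => hN.conj_mem b hb a⟩

lemma sn_subgroupOf {H L : Subgroup G} (h : Sn H) : Sn (H.subgroupOf L) := by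
  have hstep : ∀ A B : Subgroup G, Step A B →
      Step (A.subgroupOf L) (B.subgroupOf L) := by
    intro A B hs
    refine ⟨fun x hx => ?_, fun a ha b hb => ?_⟩
    · rw [Subgroup.mem_subgroupOf] at hx ⊢
      exact hs.1 hx
    · rw [Subgroup.mem_subgroupOf] at ha hb ⊢
      exact hs.2 _ ha _ hb
  have h2 : Relation.ReflTransGen Step ((⊤ : Subgroup G).subgroupOf L)
      (H.subgroupOf L) :=
    Relation.ReflTransGen.lift (fun A : Subgroup G => A.subgroupOf L)
      (fun {A B} hs => hstep A B hs) _ _ h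
  rwa [show (⊤ : Subgroup G).subgroupOf L = ⊤ from by
    simp [Subgroup.subgroupOf, Subgroup.comap_top]] at h2

lemma sn_map_subtype {L : Subgroup G} {C : Subgroup L} (hC : Sn C) (hL : Sn L) :
    Sn (C.map L.subtype) := by
  have hstep : ∀ A B : Subgroup L, Step A B →
      Step (A.map L.subtype) (B.map L.subtype) := by
    intro A B hs
    refine ⟨Subgroup.map_mono hs.1, ?_⟩
    rintro a ⟨a', ha', rfl⟩ b ⟨b', hb', rfl⟩
    refine ⟨a' * b' * a'⁻¹, hs.2 _ ha' _ hb', by simp⟩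
  have h2 : Relation.ReflTransGen Step ((⊤ : Subgroup L).map L.subtype)
      (C.map L.subtype) :=
    Relation.ReflTransGen.lift (fun A : Subgroup L => A.map L.subtype)
      (fun {A B} hs => hstep A B hs) _ _ hC
  rw [show (⊤ : Subgroup L).map L.subtype = L from by
    rw [← MonoidHom.range_eq_map, Subgroup.range_subtype]] at h2
  exact hL.trans h2

lemma sn_sup_of_normal {N K : Subgroup G} (hN : N.Normal) (hK : Sn K) :
    Sn (N ⊔ K) := by
  haveI := hN
  have hstep : ∀ A B : Subgroup G, Step A B → Step (N ⊔ A) (N ⊔ B) := by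
    intro A B hs
    refine ⟨sup_le_sup_left hs.1 N, ?_⟩
    intro a ha b hb
    have ha' : a ∈ (N : Set G) * (A : Set G) := by
      rw [← Subgroup.normal_mul]; exact_mod_cast ha
    have hb' : b ∈ (N : Set G) * (B : Set G) := by
      rw [← Subgroup.normal_mul]; exact_mod_cast hb
    obtain ⟨n, hn, x, hx, rfl⟩ := ha'
    obtain ⟨m, hm, y, hy, rfl⟩ := hb'
    have key : (n * x) * (m * y) * (n * x)⁻¹
        = n * (x * m * x⁻¹) * (x * y * x⁻¹) * n⁻¹ := by group
    rw [key]
    have h1 : n ∈ N ⊔ B := Subgroup.mem_sup_left hn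
    have h3 : x * m * x⁻¹ ∈ N ⊔ B := Subgroup.mem_sup_left (hN.conj_mem m hm x)
    have h4 : x * y * x⁻¹ ∈ N ⊔ B := Subgroup.mem_sup_right (hs.2 x hx y hy)
    exact mul_mem (mul_mem (mul_mem h1 h3) h4) (inv_mem h1)
  have h2 : Relation.ReflTransGen Step (N ⊔ (⊤ : Subgroup G)) (N ⊔ K) :=
    Relation.ReflTransGen.lift (fun A : Subgroup G => N ⊔ A)
      (fun {A B} hs => hstep A B hs) _ _ hK
  rwa [sup_top_eq] at h2

lemma exists_proper_normal {H : Subgroup G} (h : Sn H) (hne : H ≠ ⊤) :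
    ∃ N : Subgroup G, N.Normal ∧ H ≤ N ∧ N ≠ ⊤ := by
  unfold Sn at h
  have key : ∀ A : Subgroup G, Relation.ReflTransGen Step A H → A = ⊤ →
      ∃ N : Subgroup G, N.Normal ∧ H ≤ N ∧ N ≠ ⊤ := by
    intro A hA
    induction hA using Relation.ReflTransGen.head_induction_on with
    | refl => intro h'; exact absurd h' hne
    | head hs hrest ih =>
      rename_i a c
      intro ha
      by_cases hc : c = ⊤
      · exact ih hc
      · subst ha
        refine ⟨c, ?_, rtg_le hrest, hc⟩
        exact ⟨fun n hn g => hs.2 g trivial n hn⟩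
  exact key ⊤ h rfl
lemma card_lt_of_ne_top [Finite G] {T : Subgroup G} (hT : T ≠ ⊤) :
    Nat.card T < Nat.card G := by
  have h1 : (T : Set G) ⊂ Set.univ := by
    rw [Set.ssubset_univ_iff]
    intro h
    exact hT (Subgroup.coe_eq_univ.mp h)
  calc Nat.card T = (T : Set G).ncard := (Nat.card_coe_set_eq _)
    _ < (Set.univ : Set G).ncard := Set.ncard_lt_ncard h1 Set.finite_univ
    _ = Nat.card G := Set.ncard_univ G

lemma cj_map_subtype_of_normal {N : Subgroup G} {Q : Subgroup N} (hQ : Q.Normal)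
    {g : G} (hg : g ∈ N) : cj g (Q.map N.subtype) = Q.map N.subtype := by
  have key : ∀ x ∈ N, ∀ y ∈ Q.map N.subtype, x * y * x⁻¹ ∈ Q.map N.subtype := by
    rintro x hx y ⟨q, hq, rfl⟩
    exact ⟨⟨x, hx⟩ * q * ⟨x, hx⟩⁻¹, hQ.conj_mem q hq ⟨x, hx⟩, by simp⟩
  ext x
  rw [mem_cj]
  constructor
  · intro h
    have := key g hg _ h
    rwa [show g * (g⁻¹ * x * g) * g⁻¹ = x by group] at this
  · intro h
    have := key g⁻¹ (inv_mem hg) _ h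
    rwa [show g⁻¹ * x * g⁻¹⁻¹ = g⁻¹ * x * g by group] at this
lemma cj_iSup {ι : Sort*} (g : G) (k : ι → Subgroup G) :
    cj g (⨆ i, k i) = ⨆ i, cj g (k i) :=
  Subgroup.map_iSup _ _

lemma map_subtype_top (N : Subgroup G) : (⊤ : Subgroup N).map N.subtype = N := by
  rw [← MonoidHom.range_eq_map, Subgroup.range_subtype]

end WielandtAux

namespace WielandtAux

universe u

theorem lemB : ∀ (n : ℕ) (G : Type u) [Group G] [Finite G], Nat.card G ≤ n →
    ∀ A B : Subgroup G, Sn A → Sn B → B ≤ Subgroup.normalizer (A : Set G) → Sn (A ⊔ B) := by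
  intro n
  induction n with
  | zero =>
    intro G _ _ hcard
    have : 0 < Nat.card G := Nat.card_pos
    omega
  | succ n IH =>
    intro G _ _ hcard A B hA hB hBn
    by_cases hAtop : A = ⊤
    · subst hAtop; rw [top_sup_eq]; exact sn_top
    set N := Subgroup.normalClosure (A : Set G) with hN
    haveI hNnormal : N.Normal := Subgroup.normalClosure_normal
    have hAN : A ≤ N := Subgroup.le_normalClosure
    have hNne : N ≠ ⊤ := by
      obtain ⟨N₀, hN₀n, hAN₀, hN₀ne⟩ := exists_proper_normal hA hAtop
      haveI := hN₀n
      have hle : N ≤ N₀ := Subgroup.normalClosure_le_normal hAN₀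
      intro h
      exact hN₀ne (top_le_iff.mp (h ▸ hle))
    set T := N ⊔ B with hT
    have hSnT : Sn T := sn_sup_of_normal hNnormal hB
    by_cases hTtop : T = ⊤
    · -- hard case : conjugates of A by N generate a G-normal subgroup
      set P : Subgroup G := ⨆ x : N, cj (x : G) A with hP
      have hAP : A ≤ P := by
        have h1 := le_iSup (fun x : N => cj (x : G) A) (1 : N)
        rwa [show ((1 : N) : G) = 1 from rfl, cj_one] at h1
      have hPN : P ≤ N := iSup_le fun x =>
        le_of_le_of_eq (cj_mono hAN) (cj_of_normal hNnormal)
      have hcjP : ∀ g : G, cj g P = ⨆ x : N, cj (g * (x : G)) A := by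
        intro g
        rw [hP, cj_iSup]
        exact iSup_congr fun x => cj_cj g _ A
      have hcjPN : ∀ g ∈ N, cj g P = P := by
        intro g hg
        rw [hcjP]
        apply le_antisymm
        · refine iSup_le fun x => ?_
          exact le_iSup (fun y : N => cj (y : G) A) (⟨g * (x : G), mul_mem hg x.2⟩ : N)
        · refine iSup_le fun x => ?_
          have : cj ((x : G)) A = cj (g * ((⟨g⁻¹ * x, mul_mem (inv_mem hg) x.2⟩ : N) : G)) A := by
            rw [show (((⟨g⁻¹ * x, mul_mem (inv_mem hg) x.2⟩ : N) : G)) = g⁻¹ * (x : G) from rfl,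
              mul_inv_cancel_left]
          rw [this]
          exact le_iSup (fun y : N => cj (g * (y : G)) A) _
      have hcjPB : ∀ b ∈ B, cj b P = P := by
        intro b hb
        have hcjbA : cj b A = A := cj_eq_of_mem_normalizer (hBn hb)
        rw [hcjP]
        apply le_antisymm
        · refine iSup_le fun x => ?_
          have h1 : cj (b * (x : G)) A = cj (b * (x : G) * b⁻¹) A := by
            conv_rhs => rw [← hcjbA, cj_cj,
              show b * (x : G) * b⁻¹ * b = b * (x : G) by group]
          rw [h1]
          exact le_iSup (fun y : N => cj (y : G) A)
            (⟨b * (x : G) * b⁻¹, hNnormal.conj_mem _ x.2 b⟩ : N)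
        · refine iSup_le fun x => ?_
          have h1 : cj ((x : G)) A = cj (b * (b⁻¹ * (x : G) * b)) A := by
            rw [show b * (b⁻¹ * (x : G) * b) = (x : G) * b by group, ← cj_cj, hcjbA]
          rw [h1]
          have hmem : b⁻¹ * (x : G) * b ∈ N := by
            have := hNnormal.conj_mem _ x.2 b⁻¹
            rwa [inv_inv] at this
          exact le_iSup (fun y : N => cj (b * (y : G)) A) (⟨b⁻¹ * (x : G) * b, hmem⟩ : N)
      haveI hPnormal : P.Normal := by
        rw [← Subgroup.normalizer_eq_top_iff]
        rw [eq_top_iff, ← hTtop, hT]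
        refine sup_le (fun g hg => mem_normalizer_of_cj_eq (hcjPN g hg))
          (fun b hb => mem_normalizer_of_cj_eq (hcjPB b hb))
      have hPeqN : P = N := le_antisymm hPN (Subgroup.normalClosure_le_normal hAP)
      have hAeqN : A = N := by
        by_contra hne
        have hA' : Sn (A.subgroupOf N) := sn_subgroupOf hA
        have hne' : A.subgroupOf N ≠ ⊤ := by
          rw [Ne, Subgroup.subgroupOf_eq_top]
          intro h'
          exact hne (le_antisymm hAN h')
        obtain ⟨Q, hQn, hAQ, hQne⟩ := exists_proper_normal hA' hne'
        have hPQ' : P ≤ Q.map N.subtype := iSup_le fun x => by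
          calc cj (x : G) A ≤ cj (x : G) (Q.map N.subtype) :=
              cj_mono (fun a ha => ⟨⟨a, hAN ha⟩, hAQ (Subgroup.mem_subgroupOf.mpr ha), rfl⟩)
            _ = Q.map N.subtype := cj_map_subtype_of_normal hQn x.2
        have hNQ' : N ≤ Q.map N.subtype := hPeqN.ge.trans hPQ'
        have hQtop : Q = ⊤ := by
          apply Subgroup.map_injective (Subgroup.subtype_injective N)
          rw [map_subtype_top]
          exact le_antisymm (Subgroup.map_subtype_le _) hNQ'
        exact hQne hQtop
      have hAnormal : A.Normal := by rw [hAeqN]; exact hNnormal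
      exact sn_sup_of_normal hAnormal hB
    · -- easy case : work inside the proper subgroup T
      have hcardT : Nat.card T ≤ n := by
        have h1 := card_lt_of_ne_top hTtop
        omega
      have hA1 : Sn (A.subgroupOf T) := sn_subgroupOf hA
      have hB1 : Sn (B.subgroupOf T) := sn_subgroupOf hB
      have hB1n : B.subgroupOf T ≤ Subgroup.normalizer ((A.subgroupOf T : Subgroup T) : Set T) := by
        rintro ⟨b, hbT⟩ hb
        rw [Subgroup.mem_subgroupOf] at hb
        rw [Subgroup.mem_normalizer_iff]
        intro x
        simp only [Subgroup.mem_subgroupOf]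
        have h1 := Subgroup.mem_normalizer_iff.mp (hBn hb) (x : G)
        simpa using h1
      have hsn1 := IH T hcardT _ _ hA1 hB1 hB1n
      have hmap := sn_map_subtype hsn1 hSnT
      rw [Subgroup.map_sup, Subgroup.subgroupOf_map_subtype, Subgroup.subgroupOf_map_subtype,
        inf_eq_left.mpr (le_trans hAN le_sup_left), inf_eq_left.mpr le_sup_right] at hmap
      exact hmap
theorem auxJoin : ∀ (n : ℕ) (G : Type u) [Group G] [Finite G], Nat.card G ≤ n →
    ∀ H K : Subgroup G, Sn H → Sn K → Sn (H ⊔ K) := by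
  intro n
  induction n with
  | zero =>
    intro G _ _ hcard
    have : 0 < Nat.card G := Nat.card_pos
    omega
  | succ n IH =>
    intro G _ _ hcard H K hH hK
    classical
    haveI : Fintype H := Fintype.ofFinite H
    by_cases hKtop : K = ⊤
    · subst hKtop; rw [sup_top_eq]; exact sn_top
    set N := Subgroup.normalClosure (K : Set G) with hN
    haveI hNnormal : N.Normal := Subgroup.normalClosure_normal
    have hKN : K ≤ N := Subgroup.le_normalClosure
    have hNne : N ≠ ⊤ := by
      obtain ⟨N₀, hn, hle, hne⟩ := exists_proper_normal hK hKtop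
      haveI := hn
      have h2 := Subgroup.normalClosure_le_normal hle
      intro h
      exact hne (top_le_iff.mp (h ▸ h2))
    have hSnN : Sn N := sn_of_normal hNnormal
    have hcardN : Nat.card N ≤ n := by
      have h1 := card_lt_of_ne_top hNne
      omega
    have pairJoin : ∀ X Y : Subgroup G, X ≤ N → Y ≤ N → Sn X → Sn Y →
        Sn (X ⊔ Y) := by
      intro X Y hX hY sX sY
      have h1 := IH N hcardN _ _ (sn_subgroupOf sX) (sn_subgroupOf sY)
      have h2 := sn_map_subtype h1 hSnN
      rwa [Subgroup.map_sup, Subgroup.subgroupOf_map_subtype,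
        Subgroup.subgroupOf_map_subtype, inf_eq_left.mpr hX, inf_eq_left.mpr hY] at h2
    set f : H → Subgroup G := fun h => cj (h : G) K with hf
    have hfN : ∀ h : H, f h ≤ N := fun h =>
      le_of_le_of_eq (cj_mono hKN) (cj_of_normal hNnormal)
    have fold : ∀ s : Finset H, Sn (K ⊔ s.sup f) ∧ K ⊔ s.sup f ≤ N := by
      intro s
      induction s using Finset.induction_on with
      | empty =>
        rw [Finset.sup_empty, sup_bot_eq]
        exact ⟨hK, hKN⟩
      | @insert a s ha ih =>
        rw [Finset.sup_insert]
        refine ⟨?_, sup_le hKN (sup_le (hfN a) (le_trans le_sup_right ih.2))⟩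
        rw [sup_left_comm]
        exact pairJoin _ _ (hfN a) ih.2 (sn_conj hK) ih.1
    set M : Subgroup G := K ⊔ (Finset.univ : Finset H).sup f with hM
    have hSnM : Sn M := (fold _).1
    have hKM : K ≤ M := le_sup_left
    have hfM : ∀ h : H, f h ≤ M := fun h =>
      le_trans (Finset.le_sup (Finset.mem_univ h)) le_sup_right
    have hHnormM : H ≤ Subgroup.normalizer (M : Set G) := by
      intro h hh
      apply mem_normalizer_of_cj_eq
      have expand : cj h M = cj h K ⊔ (Finset.univ : Finset H).sup (fun y => cj h (f y)) := by
        rw [hM, cj_sup]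
        congr 1
        exact Finset.comp_sup_eq_sup_comp (cj h) (fun x y => cj_sup h x y) (cj_bot h)
      rw [expand]
      apply le_antisymm
      · refine sup_le ?_ (Finset.sup_le fun y _ => ?_)
        · exact hfM ⟨h, hh⟩
        · rw [hf]
          simp only []
          rw [cj_cj]
          exact hfM ⟨h * (y : G), mul_mem hh y.2⟩
      · rw [hM]
        refine sup_le ?_ (Finset.sup_le fun y _ => ?_)
        · have h1 : K = cj h (f ⟨h⁻¹, inv_mem hh⟩) := by
            rw [hf]; simp only []
            rw [cj_cj, show h * ((⟨h⁻¹, inv_mem hh⟩ : H) : G) = 1 from by simp, cj_one]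
          rw [h1]
          exact le_trans (Finset.le_sup (f := fun y : H => cj h (f y))
            (Finset.mem_univ (⟨h⁻¹, inv_mem hh⟩ : H))) le_sup_right
        · have h1 : f y = cj h (f ⟨h⁻¹ * (y : G), mul_mem (inv_mem hh) y.2⟩) := by
            rw [hf]; simp only []
            rw [cj_cj, show h * (((⟨h⁻¹ * (y : G), mul_mem (inv_mem hh) y.2⟩ : H)) : G)
              = (y : G) from by simp [mul_inv_cancel_left]]
          rw [h1]
          exact le_trans (Finset.le_sup (f := fun y : H => cj h (f y))
            (Finset.mem_univ (⟨h⁻¹ * (y : G), mul_mem (inv_mem hh) y.2⟩ : H))) le_sup_right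
    have hMH : Sn (M ⊔ H) :=
      lemB (Nat.card G) G le_rfl M H hSnM hH hHnormM
    have hMHK : M ≤ H ⊔ K := by
      rw [hM]
      refine sup_le le_sup_right (Finset.sup_le fun y _ => ?_)
      intro x hx
      rw [hf] at hx
      simp only [] at hx
      rw [mem_cj] at hx
      have h1 : (y : G) ∈ H ⊔ K := Subgroup.mem_sup_left y.2
      have h2 := mul_mem (mul_mem h1 (Subgroup.mem_sup_right hx : _ ∈ H ⊔ K)) (inv_mem h1)
      rwa [show (y : G) * ((y : G)⁻¹ * x * (y : G)) * (y : G)⁻¹ = x by group] at h2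
    have heq : H ⊔ K = M ⊔ H :=
      le_antisymm (sup_le le_sup_right (hKM.trans le_sup_left))
        (sup_le hMHK le_sup_left)
    rw [heq]
    exact hMH

end WielandtAux

/-- Wielandt's join theorem: in a finite group, the join of two subnormal
subgroups is subnormal. -/
theorem wielandt_join {G : Type*} [Group G] [Finite G] (H K : Subgroup G)
    (hH : IsSubnormal H) (hK : IsSubnormal K) : IsSubnormal (H ⊔ K) := by
  apply WielandtAux.isSubnormal_of_sn
  exact WielandtAux.auxJoin (Nat.card G) G le_rfl H K
    (WielandtAux.sn_of_isSubnormal hH) (WielandtAux.sn_of_isSubnormal hK)
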